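/- Trudinger–Moser type inequality on finite graphs: for any α > 0 there exists a constant C depending only on α and the finite connected graph G such that ∫_V e^{α u²} dμ ≤ C for all u : V → ℝ with ∫_V |∇u|² dμ ≤ 1 and ∫_V u dμ = 0. -/

import Mathlib

open Finset Real

lemma walk_bd {V : Type} (G' : SimpleGraph V) (u : V → ℝ) (s : ℝ)
    (hs : ∀ a b, G'.Adj a b → |u a - u b| ≤ s) :
    ∀ {a b : V} (p : G'.Walk a b), |u a - u b| ≤ p.length * s := by
  intro a b p
  induction p with
  | nil => simp
  | @cons a c b h q ih =>
    have h1 : |u a - u b| ≤ |u a - u c| + |u c - u b| := abs_sub_le _ _ _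
    have h2 : |u a - u c| ≤ s := hs a c h
    have : ((SimpleGraph.Walk.cons h q).length : ℝ) = q.length + 1 := by
      rw [SimpleGraph.Walk.length_cons]; push_cast; ring
    rw [this]
    nlinarith [ih]

theorem stmt_9 {V : Type} [Fintype V] (w : V → V → ℝ) (mu : V → ℝ)
    (hsymm : ∀ x y, w x y = w y x) (hnonneg : ∀ x y, 0 ≤ w x y)
    (hmu : ∀ x, 0 < mu x)
    (hconn : ∀ x y : V, Relation.ReflTransGen (fun a b => 0 < w a b) x y)
    (α : ℝ) (hα : 0 < α) :
    ∃ C : ℝ, 0 < C ∧ ∀ u : V → ℝ,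
      ∑ x, mu x * ((2 * mu x)⁻¹ * ∑ y, w x y * (u y - u x) ^ 2) ≤ 1 →
      ∑ x, mu x * u x = 0 →
      ∑ x, mu x * Real.exp (α * (u x) ^ 2) ≤ C := by
  classical
  rcases isEmpty_or_nonempty V with hV | hV
  · exact ⟨1, one_pos, fun u _ _ => by simp⟩
  set P : Finset (V × V) := Finset.univ.filter (fun p => 0 < w p.1 p.2) with hP
  set c : ℝ := if h : P.Nonempty then P.inf' h (fun p => w p.1 p.2) else 1 with hc
  have hcpos : 0 < c := by
    rw [hc]
    split
    · next h =>
      rw [Finset.lt_inf'_iff]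
      intro p hp
      exact (Finset.mem_filter.mp hp).2
    · exact one_pos
  set s : ℝ := Real.sqrt (2 / c) with hsdef
  have hs0 : 0 ≤ s := Real.sqrt_nonneg _
  set K : ℝ := (Fintype.card V : ℝ) * s with hKdef
  have hK0 : 0 ≤ K := mul_nonneg (Nat.cast_nonneg _) hs0
  -- the simple graph
  let G' : SimpleGraph V :=
    { Adj := fun a b => a ≠ b ∧ 0 < w a b
      symm := by
        constructor
        intro a b hab
        exact ⟨hab.1.symm, by rw [hsymm]; exact hab.2⟩
      loopless := by constructor; intro a ha; exact ha.1 rfl }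
  have hreach : ∀ x y : V, G'.Reachable x y := by
    intro x y
    have h := hconn x y
    induction h with
    | refl => exact SimpleGraph.Reachable.refl _
    | @tail b d h1 h2 ih =>
      rcases eq_or_ne b d with rfl | hne
      · exact ih
      · exact ih.trans (SimpleGraph.Adj.reachable ⟨hne, h2⟩)
  have hCpos : 0 < 1 + ∑ x, mu x * Real.exp (α * K ^ 2) := by
    have : 0 ≤ ∑ x, mu x * Real.exp (α * K ^ 2) :=
      Finset.sum_nonneg fun x _ => mul_nonneg (hmu x).le (Real.exp_pos _).le
    linarith
  refine ⟨1 + ∑ x, mu x * Real.exp (α * K ^ 2), hCpos, ?_⟩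
  intro u hu1 hu2
  -- total energy bound
  have hE2 : ∑ x, ∑ y, w x y * (u y - u x) ^ 2 ≤ 2 := by
    have heq : ∑ x, mu x * ((2 * mu x)⁻¹ * ∑ y, w x y * (u y - u x) ^ 2)
        = (∑ x, ∑ y, w x y * (u y - u x) ^ 2) / 2 := by
      rw [Finset.sum_div]
      refine Finset.sum_congr rfl fun x _ => ?_
      have hx := (hmu x).ne'
      field_simp
    rw [heq] at hu1
    linarith
  have hedge : ∀ a b : V, w a b * (u b - u a) ^ 2 ≤ 2 := by
    intro a b
    have h1 : w a b * (u b - u a) ^ 2 ≤ ∑ y, w a y * (u y - u a) ^ 2 :=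
      Finset.single_le_sum (f := fun y => w a y * (u y - u a) ^ 2)
        (fun y _ => mul_nonneg (hnonneg a y) (sq_nonneg _)) (Finset.mem_univ b)
    have h2 : ∑ y, w a y * (u y - u a) ^ 2 ≤ ∑ x, ∑ y, w x y * (u y - u x) ^ 2 :=
      Finset.single_le_sum (f := fun x => ∑ y, w x y * (u y - u x) ^ 2)
        (fun x _ => Finset.sum_nonneg fun y _ => mul_nonneg (hnonneg x y) (sq_nonneg _))
        (Finset.mem_univ a)
    linarith
  have habs : ∀ a b : V, G'.Adj a b → |u a - u b| ≤ s := by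
    intro a b hab
    obtain ⟨hne, hw⟩ := hab
    have hmem : (a, b) ∈ P := Finset.mem_filter.mpr ⟨Finset.mem_univ _, hw⟩
    have hcw : c ≤ w a b := by
      rw [hc, dif_pos ⟨(a, b), hmem⟩]
      exact Finset.inf'_le _ hmem
    have h2 : (u b - u a) ^ 2 ≤ 2 / w a b := by
      rw [le_div_iff₀ hw]
      have := hedge a b
      nlinarith
    have h3 : 2 / w a b ≤ 2 / c := by
      rw [div_le_div_iff₀ hw hcpos]
      nlinarith
    have h4 : (u a - u b) ^ 2 ≤ 2 / c := by nlinarith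
    calc |u a - u b| = Real.sqrt ((u a - u b) ^ 2) := (Real.sqrt_sq_eq_abs _).symm
      _ ≤ Real.sqrt (2 / c) := Real.sqrt_le_sqrt h4
      _ = s := rfl
  have hdiff : ∀ x y : V, |u x - u y| ≤ K := by
    intro x y
    obtain ⟨p⟩ := hreach x y
    have hb := walk_bd G' u s habs p.bypass
    have hlen : (p.bypass.length : ℝ) ≤ (Fintype.card V : ℝ) := by
      exact_mod_cast (p.bypass_isPath.length_lt).le
    calc |u x - u y| ≤ p.bypass.length * s := hb
      _ ≤ (Fintype.card V : ℝ) * s := mul_le_mul_of_nonneg_right hlen hs0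
  have hexneg : ∃ y, u y ≤ 0 := by
    by_contra h
    push_neg at h
    have : 0 < ∑ x, mu x * u x :=
      Finset.sum_pos (fun i _ => mul_pos (hmu i) (h i)) Finset.univ_nonempty
    linarith [hu2.le, hu2.ge, this]
  have hexpos : ∃ z, 0 ≤ u z := by
    by_contra h
    push_neg at h
    have : ∑ x, mu x * u x < 0 :=
      Finset.sum_neg (fun i _ => mul_neg_of_pos_of_neg (hmu i) (h i)) Finset.univ_nonempty
    linarith
  have hbd : ∀ x, |u x| ≤ K := by
    intro x
    rcases le_total (u x) 0 with h | h
    · obtain ⟨z, hz⟩ := hexpos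
      have h1 := hdiff z x
      have h2 := le_abs_self (u z - u x)
      rw [abs_of_nonpos h]
      linarith
    · obtain ⟨y, hy⟩ := hexneg
      have h1 := hdiff x y
      have h2 := le_abs_self (u x - u y)
      rw [abs_of_nonneg h]
      linarith
  have hterm : ∀ x, mu x * Real.exp (α * (u x) ^ 2) ≤ mu x * Real.exp (α * K ^ 2) := by
    intro x
    have h1 : (u x) ^ 2 ≤ K ^ 2 := by
      have := hbd x
      nlinarith [abs_nonneg (u x), sq_abs (u x), le_abs_self (u x), neg_abs_le (u x)]
    exact mul_le_mul_of_nonneg_left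
      (Real.exp_le_exp.mpr (mul_le_mul_of_nonneg_left h1 hα.le)) (hmu x).le
  have : ∑ x, mu x * Real.exp (α * (u x) ^ 2) ≤ ∑ x, mu x * Real.exp (α * K ^ 2) :=
    Finset.sum_le_sum fun x _ => hterm x
  linarith
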